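/- For any positive integer n, the largest size A_λ(n, 2λ+1) of a code C ⊆ F_2^n × F_2^n whose pairwise asymmetric Lee distances are all at least 2λ+1 satisfies A_λ(n, 2λ+1) ≤ 2^n(2^{n+1}−1)/(n+1). -/

import Mathlib

open Finset

def ind (p : Prop) [Decidable p] : ℤ := if p then 1 else 0

def aldSym (lam : ℕ) (a b c d : Bool) : ℤ :=
  (1 + lam) * (ind (a = b) + ind (c = d))
    + lam * ind (a = !b ∧ !b = !c ∧ !c = d)
    - 2 * (1 + lam) * ind (a = b ∧ b = c ∧ c = d)

def ALD (lam n : ℕ) (x y : (Fin n → Bool) × (Fin n → Bool)) : ℤ :=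
  ∑ i, aldSym lam (x.1 i) (x.2 i) (y.1 i) (y.2 i)

def wt {n : ℕ} (a b : Fin n → Bool) : ℕ :=
  (Finset.univ.filter fun i => a i ≠ b i).card

/-! ### Auxiliary definitions -/

def par {n : ℕ} (x : (Fin n → Bool) × (Fin n → Bool)) : Fin n → Bool :=
  fun i => xor (x.1 i) (x.2 i)

def swapAt {n : ℕ} (x : (Fin n → Bool) × (Fin n → Bool)) (i : Fin n) :
    (Fin n → Bool) × (Fin n → Bool) :=
  (Function.update x.1 i (x.2 i), Function.update x.2 i (x.1 i))

def ball {n : ℕ} (x : (Fin n → Bool) × (Fin n → Bool)) :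
    Finset ((Fin n → Bool) × (Fin n → Bool)) :=
  insert x ((Finset.univ.filter fun i => x.1 i ≠ x.2 i).image (swapAt x))

lemma aldSym_self (lam : ℕ) (a b : Bool) : aldSym lam a b a b = 0 := by
  cases a <;> cases b <;> simp [aldSym, ind] <;> ring

lemma aldSym_swap (lam : ℕ) {a b : Bool} (h : a ≠ b) :
    aldSym lam a b b a = lam := by
  cases a <;> cases b <;> simp_all [aldSym, ind]

lemma swapAt_fst {n : ℕ} (x : (Fin n → Bool) × (Fin n → Bool)) (i : Fin n) :
    (swapAt x i).1 i = x.2 i := by simp [swapAt]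

lemma swapAt_snd {n : ℕ} (x : (Fin n → Bool) × (Fin n → Bool)) (i : Fin n) :
    (swapAt x i).2 i = x.1 i := by simp [swapAt]

lemma swapAt_fst_ne {n : ℕ} (x : (Fin n → Bool) × (Fin n → Bool)) {i k : Fin n}
    (h : k ≠ i) : (swapAt x i).1 k = x.1 k := by simp [swapAt, Function.update_of_ne h]

lemma swapAt_snd_ne {n : ℕ} (x : (Fin n → Bool) × (Fin n → Bool)) {i k : Fin n}
    (h : k ≠ i) : (swapAt x i).2 k = x.2 k := by simp [swapAt, Function.update_of_ne h]

/-- distance between `x` and a single swap of `x`. -/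
lemma ALD_swap (lam n : ℕ) (x : (Fin n → Bool) × (Fin n → Bool)) (i : Fin n)
    (h : x.1 i ≠ x.2 i) : ALD lam n x (swapAt x i) = lam := by
  unfold ALD
  rw [Fintype.sum_eq_single i]
  · rw [swapAt_fst, swapAt_snd, aldSym_swap lam h]
  · intro k hk
    rw [swapAt_fst_ne x hk, swapAt_snd_ne x hk, aldSym_self]

lemma ALD_swap' (lam n : ℕ) (x : (Fin n → Bool) × (Fin n → Bool)) (i : Fin n)
    (h : x.1 i ≠ x.2 i) : ALD lam n (swapAt x i) x = lam := by
  unfold ALD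
  rw [Fintype.sum_eq_single i]
  · rw [swapAt_fst, swapAt_snd, aldSym_swap lam (Ne.symm h)]
  · intro k hk
    rw [swapAt_fst_ne x hk, swapAt_snd_ne x hk, aldSym_self]

lemma swapAt_invol {n : ℕ} (x : (Fin n → Bool) × (Fin n → Bool)) (i : Fin n) :
    swapAt (swapAt x i) i = x := by
  unfold swapAt
  ext k <;> rcases eq_or_ne k i with rfl | hk <;>
    simp_all [Function.update_of_ne]

/-- The key disjointness lemma: if the balls of `x` and `y` intersect and `x ≠ y`,
then `ALD lam n x y ≤ 2 * lam`. -/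
lemma key {n : ℕ} (lam : ℕ) (x y z : (Fin n → Bool) × (Fin n → Bool)) (hxy : x ≠ y)
    (hzx : z ∈ ball x) (hzy : z ∈ ball y) : ALD lam n x y ≤ 2 * lam := by
  have hl : (lam : ℤ) ≤ 2 * lam := by omega
  rcases Finset.mem_insert.1 hzx with rfl | hx
  · -- z = x
    rcases Finset.mem_insert.1 hzy with rfl | hy
    · exact absurd rfl hxy
    · obtain ⟨j, hj, hj2⟩ := Finset.mem_image.1 hy
      have hjy : y.1 j ≠ y.2 j := (Finset.mem_filter.1 hj).2
      rw [← hj2, ALD_swap' lam n y j hjy]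
      exact hl
  · obtain ⟨i, hi, hi2⟩ := Finset.mem_image.1 hx
    have hix : x.1 i ≠ x.2 i := (Finset.mem_filter.1 hi).2
    rcases Finset.mem_insert.1 hzy with rfl | hy
    · rw [← hi2, ALD_swap lam n x i hix]
      exact hl
    · obtain ⟨j, hj, hj2⟩ := Finset.mem_image.1 hy
      have hjy : y.1 j ≠ y.2 j := (Finset.mem_filter.1 hj).2
      have heq : swapAt x i = swapAt y j := by rw [hi2, hj2]
      rcases eq_or_ne i j with rfl | hij
      · exact absurd (by rw [← swapAt_invol x i, heq, swapAt_invol]) hxy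
      · -- two distinct swap positions
        have hy1i : y.1 i = x.2 i := by
          rw [← swapAt_fst_ne y hij, ← heq, swapAt_fst]
        have hy2i : y.2 i = x.1 i := by
          rw [← swapAt_snd_ne y hij, ← heq, swapAt_snd]
        have hx1j : x.1 j = y.2 j := by
          rw [← swapAt_fst_ne x hij.symm, heq, swapAt_fst]
        have hx2j : x.2 j = y.1 j := by
          rw [← swapAt_snd_ne x hij.symm, heq, swapAt_snd]
        have hzero : ∀ k ∈ (Finset.univ : Finset (Fin n)),
            k ∉ ({i, j} : Finset (Fin n)) →
            aldSym lam (x.1 k) (x.2 k) (y.1 k) (y.2 k) = 0 := by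
          intro k _ hk
          simp only [Finset.mem_insert, Finset.mem_singleton, not_or] at hk
          have h1 : x.1 k = y.1 k := by
            rw [← swapAt_fst_ne x hk.1, heq, swapAt_fst_ne y hk.2]
          have h2 : x.2 k = y.2 k := by
            rw [← swapAt_snd_ne x hk.1, heq, swapAt_snd_ne y hk.2]
          rw [h1, h2, aldSym_self]
        unfold ALD
        rw [← Finset.sum_subset (Finset.subset_univ ({i, j} : Finset (Fin n))) hzero,
          Finset.sum_pair hij, hy1i, hy2i, hx1j, hx2j, aldSym_swap lam hix,
          aldSym_swap lam (Ne.symm hjy)]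
        push_cast
        omega

lemma ball_subset_fiber {n : ℕ} (x : (Fin n → Bool) × (Fin n → Bool)) :
    ∀ z ∈ ball x, par z = par x := by
  intro z hz
  rcases Finset.mem_insert.1 hz with rfl | hz
  · rfl
  · obtain ⟨i, _, rfl⟩ := Finset.mem_image.1 hz
    funext k
    rcases eq_or_ne k i with rfl | hk
    · simp [par, swapAt_fst, swapAt_snd, Bool.xor_comm]
    · simp [par, swapAt_fst_ne x hk, swapAt_snd_ne x hk]

lemma ball_card {n : ℕ} (x : (Fin n → Bool) × (Fin n → Bool)) :
    (ball x).card = wt x.1 x.2 + 1 := by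
  unfold ball
  rw [Finset.card_insert_of_notMem, Finset.card_image_of_injOn]
  · rfl
  · intro i hi j hj hswap
    by_contra hij
    have := congrFun (congrArg Prod.fst hswap) i
    rw [swapAt_fst, swapAt_fst_ne x (Ne.symm (Ne.symm hij))] at this
    exact (Finset.mem_filter.1 hi).2 this.symm
  · intro hx
    obtain ⟨i, hi, hswap⟩ := Finset.mem_image.1 hx
    have := congrFun (congrArg Prod.fst hswap) i
    rw [swapAt_fst] at this
    exact (Finset.mem_filter.1 hi).2 this.symm

/-- The fiber of a parity vector has `2^n` elements. -/
lemma fiber_card {n : ℕ} (u : Fin n → Bool) :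
    ((Finset.univ : Finset ((Fin n → Bool) × (Fin n → Bool))).filter
      fun p => par p = u).card = 2 ^ n := by
  rw [show (2 ^ n : ℕ) = Fintype.card (Fin n → Bool) by simp]
  apply Finset.card_nbij' (i := fun p => p.1)
    (j := fun a => (a, fun i => xor (u i) (a i)))
  · intro p _; exact Finset.mem_univ _
  · intro a _
    simp only [Finset.mem_coe, Finset.mem_filter, Finset.mem_univ, true_and]
    funext i
    cases h1 : a i <;> cases h2 : u i <;> simp [par, h1, h2]
  · intro p hp
    simp only [Finset.mem_coe, Finset.mem_filter, Finset.mem_univ, true_and] at hp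
    have : ∀ i, xor (u i) (p.1 i) = p.2 i := by
      intro i
      have := congrFun hp i
      simp only [par] at this
      rw [← this]
      cases p.1 i <;> cases p.2 i <;> simp
    exact Prod.ext rfl (funext this)
  · intro a _; rfl

lemma wt_of_par {n : ℕ} (u : Fin n → Bool) (x : (Fin n → Bool) × (Fin n → Bool))
    (h : par x = u) : wt x.1 x.2 = (Finset.univ.filter fun i => u i = true).card := by
  unfold wt
  apply Finset.card_nbij' (i := fun i => i) (j := fun i => i) <;>
    intro i hi <;> simp only [Finset.mem_filter, Finset.mem_univ, true_and] at *
  · rw [← h]; revert hi; simp only [par]; cases x.1 i <;> cases x.2 i <;> simp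
  · rw [← h] at hi; revert hi; simp only [par]; cases x.1 i <;> cases x.2 i <;> simp

/-- Packing bound inside one fiber. -/
lemma fiber_bound (lam n : ℕ) (C : Finset ((Fin n → Bool) × (Fin n → Bool)))
    (hC : ∀ x ∈ C, ∀ y ∈ C, x ≠ y → (2 * lam + 1 : ℤ) ≤ ALD lam n x y)
    (u : Fin n → Bool) :
    (C.filter fun p => par p = u).card *
      ((Finset.univ.filter fun i => u i = true).card + 1) ≤ 2 ^ n := by
  classical
  set S := C.filter fun p => par p = u with hS
  have hdisj : ∀ x ∈ S, ∀ y ∈ S, x ≠ y → Disjoint (ball x) (ball y) := by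
    intro x hx y hy hxy
    rw [Finset.disjoint_left]
    intro z hzx hzy
    have h1 := key lam x y z hxy hzx hzy
    have h2 := hC x (Finset.mem_filter.1 hx).1 y (Finset.mem_filter.1 hy).1 hxy
    omega
  calc S.card * ((Finset.univ.filter fun i => u i = true).card + 1)
      = ∑ x ∈ S, (ball x).card := by
        rw [Finset.sum_congr rfl fun x hx => ?_, Finset.sum_const, smul_eq_mul]
        rw [ball_card, wt_of_par u x (Finset.mem_filter.1 hx).2]
    _ = (S.biUnion ball).card := (Finset.card_biUnion hdisj).symm
    _ ≤ ((Finset.univ : Finset ((Fin n → Bool) × (Fin n → Bool))).filter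
          fun p => par p = u).card := by
        apply Finset.card_le_card
        intro z hz
        obtain ⟨x, hx, hzx⟩ := Finset.mem_biUnion.1 hz
        simp only [Finset.mem_filter, Finset.mem_univ, true_and]
        rw [ball_subset_fiber x z hzx, (Finset.mem_filter.1 hx).2]
    _ = 2 ^ n := fiber_card u

/-- The combinatorial identity `∑_{k=0}^n C(n,k)/(k+1) = (2^{n+1}-1)/(n+1)`. -/
lemma choose_sum_identity (n : ℕ) :
    ∑ k ∈ Finset.range (n + 1), (n.choose k : ℚ) / (k + 1)
      = (2 ^ (n + 1) - 1) / (n + 1) := by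
  have h1 : ∀ k, (n.choose k : ℚ) / (k + 1) = ((n + 1).choose (k + 1) : ℚ) / (n + 1) := by
    intro k
    have := Nat.add_one_mul_choose_eq n k
    have hq : ((n : ℚ) + 1) * (n.choose k) = ((n + 1).choose (k + 1) : ℚ) * (k + 1) := by
      exact_mod_cast congrArg (Nat.cast : ℕ → ℚ) this
    rw [div_eq_div_iff (by positivity) (by positivity)]
    linarith
  rw [Finset.sum_congr rfl fun k _ => h1 k, ← Finset.sum_div]
  congr 1
  have h2 : ∑ k ∈ Finset.range (n + 2), ((n + 1).choose k : ℚ) = 2 ^ (n + 1) := by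
    exact_mod_cast congrArg (Nat.cast : ℕ → ℚ) (Nat.sum_range_choose (n + 1))
  rw [Finset.sum_range_succ'] at h2
  simp only [Nat.choose_zero_right, Nat.cast_one] at h2
  linarith

/-- Sum over all parity vectors, grouped by weight. -/
lemma par_sum (n : ℕ) :
    ∑ u : Fin n → Bool,
        (1 : ℚ) / ((Finset.univ.filter fun i => u i = true).card + 1)
      = (2 ^ (n + 1) - 1) / (n + 1) := by
  classical
  have hbij : ∑ u : Fin n → Bool,
      (1 : ℚ) / ((Finset.univ.filter fun i => u i = true).card + 1)
      = ∑ s ∈ (Finset.univ : Finset (Fin n)).powerset, (1 : ℚ) / (s.card + 1) := by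
    refine Finset.sum_nbij' (fun u => Finset.univ.filter fun i => u i = true)
      (fun s => fun i => i ∈ s) ?_ ?_ ?_ ?_ ?_
    · intro u _; exact Finset.mem_powerset.2 (Finset.filter_subset _ _)
    · intro s _; exact Finset.mem_univ _
    · intro u _
      funext i
      simp
    · intro s _
      ext i
      simp
    · intro u _; rfl
  rw [hbij, Finset.sum_powerset_apply_card (fun k => (1 : ℚ) / (k + 1)), Finset.card_univ,
    Fintype.card_fin]
  rw [← choose_sum_identity n]
  apply Finset.sum_congr rfl
  intro k _
  rw [nsmul_eq_mul]
  ring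

theorem ald_code_upper_bound (lam n : ℕ) (hlam : 0 < lam) (hn : 0 < n)
    (C : Finset ((Fin n → Bool) × (Fin n → Bool)))
    (hC : ∀ x ∈ C, ∀ y ∈ C, x ≠ y → (2 * lam + 1 : ℤ) ≤ ALD lam n x y) :
    (C.card : ℚ) ≤ 2 ^ n * (2 ^ (n + 1) - 1) / (n + 1) := by
  classical
  have hsplit : C.card = ∑ u : Fin n → Bool, (C.filter fun p => par p = u).card :=
    Finset.card_eq_sum_card_fiberwise fun x _ => Finset.mem_univ (par x)
  have hbound : ∀ u : Fin n → Bool,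
      ((C.filter fun p => par p = u).card : ℚ)
        ≤ 2 ^ n * (1 / ((Finset.univ.filter fun i => u i = true).card + 1)) := by
    intro u
    have h := fiber_bound lam n C hC u
    have hpos : (0 : ℚ) < ((Finset.univ.filter fun i => u i = true).card : ℚ) + 1 := by
      positivity
    rw [mul_one_div, le_div_iff₀ hpos]
    exact_mod_cast h
  calc (C.card : ℚ) = ∑ u : Fin n → Bool, ((C.filter fun p => par p = u).card : ℚ) := by
        exact_mod_cast congrArg (Nat.cast : ℕ → ℚ) hsplit
    _ ≤ ∑ u : Fin n → Bool,
          (2 : ℚ) ^ n * (1 / (((Finset.univ.filter fun i => u i = true).card : ℚ) + 1)) :=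
        Finset.sum_le_sum fun u _ => hbound u
    _ = 2 ^ n * ((2 ^ (n + 1) - 1) / (n + 1)) := by
        rw [← Finset.mul_sum, par_sum n]
    _ = 2 ^ n * (2 ^ (n + 1) - 1) / (n + 1) := by ring
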